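/- arXiv:2604.13591 — 3 statements merged into one kernel-verified Lean document; each statement's English description precedes it below -/
import Mathlib

section
/- Let Q > 2, S > 0 and C > 0 be real numbers, set p = 2Q/(Q−2) and q = (Q−2)/2, and for ε > 0 define Φ_ε(s) = (s²/2)·S^{Q/2} − (s^p/p)·S^{Q/2} + C·s^p·ε^q for s ≥ 0. Then there exist ε₀ > 0 and C′ > 0 such that for every ε ∈ (0, ε₀), sup_{s ≥ 0} Φ_ε(s) ≤ (1/Q)·S^{Q/2} + C′·ε^{(Q−2)/2}. -/
-- Young inequality: for t ≥ 0, 2 < p: t^2 ≤ (2/p) t^p + (1 - 2/p)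
lemma young_aux (p t : ℝ) (hp : 2 < p) (ht : 0 ≤ t) :
    t ^ 2 ≤ (2 / p) * t ^ p + (1 - 2 / p) := by
  have hp0 : 0 < p := by linarith
  have h := Real.geom_mean_le_arith_mean2_weighted
    (by positivity : (0:ℝ) ≤ 2 / p) (by
      have : 2 / p < 1 := by rw [div_lt_one hp0]; linarith
      linarith : (0:ℝ) ≤ 1 - 2 / p)
    (by positivity : (0:ℝ) ≤ t ^ p) (by norm_num : (0:ℝ) ≤ 1)
    (by ring)
  have h1 : (t ^ p) ^ (2 / p) = t ^ 2 := by
    rw [← Real.rpow_natCast t 2, ← Real.rpow_mul ht]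
    congr 1
    field_simp
    norm_num
  rw [h1, Real.one_rpow, mul_one, mul_one] at h
  linarith

-- key pointwise bound: sup of A s²/2 - b s^p/p is (1/2-1/p) A (A/b)^q
lemma key_aux (p q A b : ℝ) (hp : 2 < p) (hq : 0 < q) (hA : 0 < A) (hb : 0 < b)
    (hpq : q / 2 * p = q + 1) :
    ∀ s : ℝ, 0 ≤ s → A * s ^ 2 / 2 - b * s ^ p / p ≤ (1 / 2 - 1 / p) * A * (A / b) ^ q := by
  intro s hs
  have hp0 : 0 < p := by linarith
  set r : ℝ := b / A with hr_def
  have hr : 0 < r := by positivity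
  set t : ℝ := r ^ (q / 2) * s with ht_def
  have ht : 0 ≤ t := by positivity
  have ht2 : t ^ 2 = r ^ q * s ^ 2 := by
    have h := (Real.rpow_add hr (q / 2) (q / 2)).symm
    calc t ^ 2 = (r ^ (q / 2) * r ^ (q / 2)) * s ^ 2 := by ring
    _ = r ^ (q / 2 + q / 2) * s ^ 2 := by rw [h]
    _ = r ^ q * s ^ 2 := by rw [show q / 2 + q / 2 = q by ring]
  have htp : t ^ p = r ^ (q + 1) * s ^ p := by
    rw [ht_def, Real.mul_rpow (by positivity) hs, ← Real.rpow_mul hr.le, hpq]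
  have yt := young_aux p t hp ht
  rw [ht2, htp] at yt
  have hru : r ^ (q + 1) = r ^ q * r := by
    rw [Real.rpow_add hr, Real.rpow_one]
  rw [hru] at yt
  set u : ℝ := r ^ q with hu_def
  have hu : 0 < u := Real.rpow_pos_of_pos hr q
  have hAb : (A / b) ^ q = u⁻¹ := by
    have : A / b = r⁻¹ := by rw [hr_def]; field_simp
    rw [this, Real.inv_rpow hr.le, hu_def]
  have hAr : A * r = b := by rw [hr_def]; field_simp
  have h2 := mul_le_mul_of_nonneg_left yt (by positivity : (0:ℝ) ≤ A / (2 * u))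
  have e1 : A / (2 * u) * (u * s ^ 2) = A * s ^ 2 / 2 := by
    field_simp
  have e2 : A / (2 * u) * ((2 / p) * (u * r * s ^ p) + (1 - 2 / p))
      = (A * r) * s ^ p / p + (1 / 2 - 1 / p) * A * u⁻¹ := by
    field_simp
  rw [e1, e2, hAr] at h2
  rw [hAb]
  linarith

lemma bern_aux (q x : ℝ) (hq : 0 < q) (hx : 0 < x) (hxm : max q 1 * x ≤ 1 / 2) :
    ((1 - x) ^ q)⁻¹ ≤ 1 + 4 * max q 1 * x := by
  set m : ℝ := max q 1 with hm_def
  have hm1 : 1 ≤ m := le_max_right q 1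
  have hqm : q ≤ m := le_max_left q 1
  have hx1 : x ≤ 1 / 2 := by nlinarith
  have h1x : 0 < 1 - x := by linarith
  have hlow : 1 - m * x ≤ (1 - x) ^ q := by
    rcases le_total q 1 with h | h
    · have hm : m = 1 := max_eq_right h
      have := Real.rpow_le_rpow_of_exponent_ge h1x (by linarith) h
      rw [Real.rpow_one] at this
      rw [hm]; linarith
    · have hm : m = q := max_eq_left h
      have := one_add_mul_self_le_rpow_one_add (by linarith : (-1:ℝ) ≤ -x) h
      rw [hm]
      calc 1 - q * x = 1 + q * (-x) := by ring
      _ ≤ (1 + -x) ^ q := this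
      _ = (1 - x) ^ q := by ring_nf
  have hmx : 0 < m * x := by positivity
  have hmul : 1 ≤ (1 + 4 * m * x) * (1 - x) ^ q := by
    have h3 := mul_le_mul_of_nonneg_left hlow (by positivity : (0:ℝ) ≤ 1 + 4 * m * x)
    nlinarith
  have hpos : 0 < (1 - x) ^ q := Real.rpow_pos_of_pos h1x q
  rw [← one_div, div_le_iff₀ hpos]
  nlinarith

/-- For `Q > 2`, `S > 0`, `C > 0`, `p = 2Q/(Q−2)`, `q = (Q−2)/2`, and
`Φ_ε(s) = (s²/2)·S^{Q/2} − (s^p/p)·S^{Q/2} + C·s^p·ε^q`, there exist `ε₀ > 0` and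
`C′ > 0` such that for every `ε ∈ (0, ε₀)`,
`sup_{s ≥ 0} Φ_ε(s) ≤ (1/Q)·S^{Q/2} + C′·ε^{(Q−2)/2}`. -/
theorem stmt_2 (Q S C : ℝ) (hQ : 2 < Q) (hS : 0 < S) (hC : 0 < C)
    (p q : ℝ) (hp : p = 2 * Q / (Q - 2)) (hq : q = (Q - 2) / 2)
    (Φ : ℝ → ℝ → ℝ)
    (hΦ : ∀ ε s : ℝ, Φ ε s = s ^ 2 / 2 * S ^ (Q / 2) - s ^ p / p * S ^ (Q / 2)
      + C * s ^ p * ε ^ q) :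
    ∃ ε₀ > (0:ℝ), ∃ C' > (0:ℝ), ∀ ε : ℝ, ε ∈ Set.Ioo 0 ε₀ →
      ∀ s : ℝ, 0 ≤ s → Φ ε s ≤ 1 / Q * S ^ (Q / 2) + C' * ε ^ ((Q - 2) / 2) := by
  have hQ0 : 0 < Q := by linarith
  have hQ2 : 0 < Q - 2 := by linarith
  have hp2 : 2 < p := by
    rw [hp, lt_div_iff₀ hQ2]; linarith
  have hp0 : 0 < p := by linarith
  have hq0 : 0 < q := by rw [hq]; positivity
  have hhalf : 1 / 2 - 1 / p = 1 / Q := by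
    rw [hp]; field_simp
    ring
  have hpq : q / 2 * p = q + 1 := by
    rw [hp, hq]; field_simp; ring
  set A : ℝ := S ^ (Q / 2) with hA_def
  have hA : 0 < A := Real.rpow_pos_of_pos hS _
  set m : ℝ := max q 1 with hm_def
  have hm1 : 1 ≤ m := le_max_right q 1
  have hm0 : 0 < m := by linarith
  set Y : ℝ := A / (2 * m * p * C) with hY_def
  have hY : 0 < Y := by positivity
  refine ⟨Y ^ (1 / q), Real.rpow_pos_of_pos hY _, 4 * m * p * C / Q, by positivity,
    fun ε hε s hs => ?_⟩
  obtain ⟨hε0, hεY⟩ := hε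
  have he : 0 < ε ^ q := Real.rpow_pos_of_pos hε0 q
  have heY : ε ^ q < Y := by
    have h1 : ε ^ q < (Y ^ (1 / q)) ^ q :=
      Real.rpow_lt_rpow hε0.le hεY hq0
    have h2 : (Y ^ (1 / q)) ^ q = Y := by
      rw [← Real.rpow_mul hY.le, one_div_mul_cancel (ne_of_gt hq0), Real.rpow_one]
    rwa [h2] at h1
  set e : ℝ := ε ^ q with he_def
  have hpce : p * C * e < A / (2 * m) := by
    have h3 : p * C * e < p * C * Y := by
      exact mul_lt_mul_of_pos_left heY (by positivity)
    have h4 : p * C * Y = A / (2 * m) := by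
      rw [hY_def]; field_simp
    linarith
  set x : ℝ := p * C * e / A with hx_def
  have hx : 0 < x := by positivity
  have hxA : x * A = p * C * e := by rw [hx_def]; field_simp
  have hxm : m * x ≤ 1 / 2 := by
    have h6 : m * (p * C * e) ≤ A / 2 := by
      have h5 : m * (p * C * e) < m * (A / (2 * m)) := mul_lt_mul_of_pos_left hpce hm0
      have h5' : m * (A / (2 * m)) = A / 2 := by field_simp
      linarith
    calc m * x = m * (p * C * e) / A := by rw [hx_def]; ring
    _ ≤ (A / 2) / A := (div_le_div_iff_of_pos_right hA).mpr h6
    _ = 1 / 2 := by field_simp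
  have hx1 : x ≤ 1 / 2 := by nlinarith
  set b : ℝ := A - p * C * e with hb_def
  have hb_eq : b = A * (1 - x) := by rw [hb_def, ← hxA]; ring
  have h1x : 0 < 1 - x := by linarith
  have hb : 0 < b := by rw [hb_eq]; positivity
  have hΦ2 : Φ ε s = A * s ^ 2 / 2 - b * s ^ p / p := by
    rw [hΦ ε s, hb_def, ← he_def]; field_simp; ring
  have hkey := key_aux p q A b hp2 hq0 hA hb hpq s hs
  have hAb : (A / b) ^ q = ((1 - x) ^ q)⁻¹ := by
    have hinv : A / b = (1 - x)⁻¹ := by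
      rw [hb_eq]; field_simp
    rw [hinv, Real.inv_rpow h1x.le]
  have hbern := bern_aux q x hq0 hx hxm
  have h7 : (1 / 2 - 1 / p) * A * (A / b) ^ q ≤ (1 / 2 - 1 / p) * A * (1 + 4 * m * x) := by
    rw [hAb]
    apply mul_le_mul_of_nonneg_left hbern
    rw [hhalf]; positivity
  have h8 : (1 / 2 - 1 / p) * A * (1 + 4 * m * x) = 1 / Q * A + 4 * m * p * C / Q * e := by
    rw [hhalf, hx_def]; field_simp
  rw [hΦ2, ← hq, ← he_def]
  linarith
end

section
/- Let (Ω, μ) be a measure space, p > 1 a real number, B > 0, and let v, e₁ : Ω → ℝ be measurable with e₁ ≥ 0 almost everywhere. Assume there exist a measurable set H with 0 < μ(H) < ∞ and constants c > 0, M ≥ 0 such that e₁ ≥ c and |v| ≤ M almost everywhere on H, and assume that for every t ∈ ℝ the function (max(v + t·e₁, 0))^p is integrable on Ω. Then the function h(t) = B·t − (1/p)∫_Ω (max(v + t·e₁, 0))^p dμ is bounded above on ℝ, and h(t) → −∞ as t → +∞. -/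
open MeasureTheory Filter

/-- On a measure space `(Ω, μ)`, with `p > 1`, `B > 0`, measurable
`v, e₁` with `e₁ ≥ 0` a.e., a measurable set `H` with `0 < μ(H) < ∞` and constants
`c > 0`, `M ≥ 0` such that `e₁ ≥ c` and `|v| ≤ M` a.e. on `H`, and assuming that
for every `t ∈ ℝ` the function `(max(v + t·e₁, 0))^p` is integrable on `Ω`, the
function `h(t) = B·t − (1/p)∫_Ω (max(v + t·e₁, 0))^p dμ` is bounded above on `ℝ`
and `h(t) → −∞` as `t → +∞`. -/
theorem stmt_8 {Ω : Type*} [MeasurableSpace Ω] (μ : Measure Ω)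
    (p : ℝ) (hp : 1 < p) (B : ℝ) (hB : 0 < B)
    (v e₁ : Ω → ℝ) (hv : Measurable v) (he₁ : Measurable e₁)
    (he₁nonneg : ∀ᵐ x ∂μ, 0 ≤ e₁ x)
    (H : Set Ω) (hH : MeasurableSet H) (hHpos : 0 < μ H) (hHfin : μ H < ⊤)
    (c M : ℝ) (hc : 0 < c) (hM : 0 ≤ M)
    (he₁c : ∀ᵐ x ∂μ, x ∈ H → c ≤ e₁ x)
    (hvM : ∀ᵐ x ∂μ, x ∈ H → |v x| ≤ M)
    (hint : ∀ t : ℝ, Integrable (fun x => max (v x + t * e₁ x) 0 ^ p) μ)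
    (h : ℝ → ℝ)
    (hhdef : ∀ t : ℝ, h t = B * t - 1 / p * ∫ x, max (v x + t * e₁ x) 0 ^ p ∂μ) :
    (∃ K : ℝ, ∀ t : ℝ, h t ≤ K) ∧ Tendsto h atTop atBot := by
  have hp0 : (0 : ℝ) < p := lt_trans one_pos hp
  set m := (μ H).toReal with hm
  have hm0 : 0 < m := ENNReal.toReal_pos hHpos.ne' hHfin.ne
  set k := m / p with hk
  have hk0 : 0 < k := div_pos hm0 hp0
  set s₁ : ℝ := max 1 (((B / c + 1) / k) ^ (p - 1)⁻¹) with hs₁def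
  have hs₁1 : (1 : ℝ) ≤ s₁ := le_max_left _ _
  have hp1 : (0 : ℝ) < p - 1 := by linarith
  have hs₁pow : B / c + 1 ≤ k * s₁ ^ (p - 1) := by
    have hK0 : (0 : ℝ) ≤ (B / c + 1) / k := by positivity
    have h1 : (((B / c + 1) / k) ^ (p - 1)⁻¹) ^ (p - 1) = (B / c + 1) / k :=
      Real.rpow_inv_rpow hK0 (by linarith : p - 1 ≠ 0)
    have h2 : (((B / c + 1) / k) ^ (p - 1)⁻¹) ^ (p - 1) ≤ s₁ ^ (p - 1) :=
      Real.rpow_le_rpow (Real.rpow_nonneg hK0 _) (le_max_right _ _) (le_of_lt hp1)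
    rw [h1] at h2
    calc B / c + 1 = k * ((B / c + 1) / k) := by field_simp
      _ ≤ k * s₁ ^ (p - 1) := mul_le_mul_of_nonneg_left h2 hk0.le
  -- lower bound for the integral
  have key : ∀ t : ℝ, 0 ≤ t * c - M →
      (t * c - M) ^ p * m ≤ ∫ x, max (v x + t * e₁ x) 0 ^ p ∂μ := by
    intro t hs
    have ht0 : 0 ≤ t := by nlinarith
    have hnn : ∀ᵐ x ∂μ, 0 ≤ max (v x + t * e₁ x) 0 ^ p :=
      Eventually.of_forall fun x => Real.rpow_nonneg (le_max_right _ _) _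
    have h1 : ∫ x in H, (t * c - M) ^ p ∂μ ≤ ∫ x in H, max (v x + t * e₁ x) 0 ^ p ∂μ := by
      refine integral_mono_ae (integrableOn_const hHfin.ne) (hint t).integrableOn ?_
      rw [EventuallyLE, ae_restrict_iff' hH]
      filter_upwards [he₁c, hvM] with x h1 h2 hx
      have hv' := h2 hx
      have he' := h1 hx
      have hle : t * c - M ≤ v x + t * e₁ x := by
        have h3 : t * c ≤ t * e₁ x := mul_le_mul_of_nonneg_left he' ht0
        have h4 : -M ≤ v x := by
          have := abs_le.mp hv'
          linarith [this.1]
        linarith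
      have hle2 : t * c - M ≤ max (v x + t * e₁ x) 0 := le_trans hle (le_max_left _ _)
      exact Real.rpow_le_rpow hs hle2 hp0.le
    have h2 : ∫ x in H, max (v x + t * e₁ x) 0 ^ p ∂μ ≤ ∫ x, max (v x + t * e₁ x) 0 ^ p ∂μ :=
      setIntegral_le_integral (hint t) hnn
    have h3 : ∫ x in H, (t * c - M) ^ p ∂μ = (t * c - M) ^ p * m := by
      rw [setIntegral_const, smul_eq_mul, mul_comm]
      rfl
    linarith
  -- main estimate for large t
  have main : ∀ t : ℝ, s₁ ≤ t * c - M → h t ≤ B * M / c + M - c * t := by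
    intro t hts
    set s := t * c - M with hsdef
    have hs1 : (1 : ℝ) ≤ s := le_trans hs₁1 hts
    have hspos : (0 : ℝ) < s := by linarith
    have hint' := key t hspos.le
    have hspow : s ^ p = s * s ^ (p - 1) := by
      nth_rewrite 1 [show p = 1 + (p - 1) from by ring]
      rw [Real.rpow_add hspos, Real.rpow_one]
    have hmono : s₁ ^ (p - 1) ≤ s ^ (p - 1) :=
      Real.rpow_le_rpow (by linarith) hts hp1.le
    have h2 : (B / c + 1) * s ≤ k * s ^ p := by
      rw [hspow]
      calc (B / c + 1) * s ≤ (k * s₁ ^ (p - 1)) * s :=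
            mul_le_mul_of_nonneg_right hs₁pow hspos.le
        _ ≤ (k * s ^ (p - 1)) * s :=
            mul_le_mul_of_nonneg_right (mul_le_mul_of_nonneg_left hmono hk0.le) hspos.le
        _ = k * (s * s ^ (p - 1)) := by ring
    have h3 : k * s ^ p ≤ 1 / p * ∫ x, max (v x + t * e₁ x) 0 ^ p ∂μ := by
      rw [hk]
      calc m / p * s ^ p = 1 / p * (s ^ p * m) := by ring
        _ ≤ _ := mul_le_mul_of_nonneg_left hint' (by positivity)
    have e : (B / c + 1) * s = B * t - B * M / c + c * t - M := by
      field_simp [hsdef]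
      ring
    rw [hhdef t]
    linarith
  have ht₀ : ∀ t : ℝ, (M + s₁) / c ≤ t → s₁ ≤ t * c - M := by
    intro t ht
    have := (div_le_iff₀ hc).mp ht
    linarith
  constructor
  · refine ⟨max (B * ((M + s₁) / c)) (B * M / c), fun t => ?_⟩
    rcases le_total t ((M + s₁) / c) with hle | hge
    · have hnn : 0 ≤ ∫ x, max (v x + t * e₁ x) 0 ^ p ∂μ :=
        integral_nonneg fun x => Real.rpow_nonneg (le_max_right _ _) _
      have : h t ≤ B * t := by
        rw [hhdef t]
        have := mul_nonneg (by positivity : (0:ℝ) ≤ 1 / p) hnn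
        linarith
      calc h t ≤ B * t := this
        _ ≤ B * ((M + s₁) / c) := mul_le_mul_of_nonneg_left hle hB.le
        _ ≤ _ := le_max_left _ _
    · have := main t (ht₀ t hge)
      have hct : M + s₁ ≤ c * t := by
        have := (div_le_iff₀ hc).mp hge
        linarith
      calc h t ≤ B * M / c + M - c * t := this
        _ ≤ B * M / c + M - (M + s₁) := by linarith
        _ ≤ B * M / c := by linarith
        _ ≤ _ := le_max_right _ _
  · have hlin : Tendsto (fun t : ℝ => B * M / c + M - c * t) atTop atBot := by
      have h1 : Tendsto (fun t : ℝ => c * t) atTop atTop :=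
        tendsto_id.const_mul_atTop hc
      have h2 : Tendsto (fun t : ℝ => -(c * t)) atTop atBot := tendsto_neg_atBot_iff.mpr h1
      have := tendsto_atBot_add_const_left atTop (B * M / c + M) h2
      refine this.congr fun t => by ring
    refine tendsto_atBot_mono' atTop ?_ hlin
    filter_upwards [eventually_ge_atTop ((M + s₁) / c)] with t ht
    exact main t (ht₀ t ht)
end

section
/- Let Q > 3 and S > 0 be real numbers and 0 < λ₁ < λ₂. Set a = 1 − λ₁/λ₂, b = Q/(Q+2), σ₀ = (b·a)^{(Q−2)/4}·S^{Q/4}, K₁ = (λ₂^{−Q/4}/(Q+2))·S^{Q/4}·b^{(Q−2)/4}·(λ₂ − λ₁)^{(Q+2)/4}, and α₀ = (1/(Q+2))·b^{(Q−2)/2}·a^{Q/2}·S^{Q/2}. Then for every real e with 0 ≤ e ≤ K₁, one has (1/2)·a·σ₀² − ((Q−2)/(2Q))·S^{−Q/(Q−2)}·σ₀^{2Q/(Q−2)} − e·λ₂^{−1/2}·σ₀ ≥ α₀ > 0. -/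
/-- For `Q > 3`, `S > 0`, `0 < λ₁ < λ₂`, with `a = 1 − λ₁/λ₂`,
`b = Q/(Q+2)`, `σ₀ = (b·a)^{(Q−2)/4}·S^{Q/4}`,
`K₁ = (λ₂^{−Q/4}/(Q+2))·S^{Q/4}·b^{(Q−2)/4}·(λ₂ − λ₁)^{(Q+2)/4}` and
`α₀ = (1/(Q+2))·b^{(Q−2)/2}·a^{Q/2}·S^{Q/2}`: for every `0 ≤ e ≤ K₁`,
`(1/2)·a·σ₀² − ((Q−2)/(2Q))·S^{−Q/(Q−2)}·σ₀^{2Q/(Q−2)} − e·λ₂^{−1/2}·σ₀ ≥ α₀ > 0`. -/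
theorem stmt_10 (Q S lam₁ lam₂ : ℝ) (hQ : 3 < Q) (hS : 0 < S)
    (hlam₁ : 0 < lam₁) (hlam : lam₁ < lam₂)
    (a b σ₀ K₁ α₀ : ℝ)
    (ha : a = 1 - lam₁ / lam₂) (hb : b = Q / (Q + 2))
    (hσ₀ : σ₀ = (b * a) ^ ((Q - 2) / 4) * S ^ (Q / 4))
    (hK₁ : K₁ = lam₂ ^ (-(Q / 4)) / (Q + 2) * S ^ (Q / 4) * b ^ ((Q - 2) / 4)
      * (lam₂ - lam₁) ^ ((Q + 2) / 4))
    (hα₀ : α₀ = 1 / (Q + 2) * b ^ ((Q - 2) / 2) * a ^ (Q / 2) * S ^ (Q / 2)) :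
    ∀ e : ℝ, 0 ≤ e → e ≤ K₁ →
      1 / 2 * a * σ₀ ^ 2 - (Q - 2) / (2 * Q) * S ^ (-(Q / (Q - 2))) * σ₀ ^ (2 * Q / (Q - 2))
        - e * lam₂ ^ (-(1:ℝ) / 2) * σ₀ ≥ α₀ ∧ α₀ > 0 := by
  intro e he heK
  have hl2 : 0 < lam₂ := hlam₁.trans hlam
  have hΔ : 0 < lam₂ - lam₁ := sub_pos.2 hlam
  have ha' : 0 < a := by
    rw [ha]
    have h1 : lam₁ / lam₂ < 1 := (div_lt_one hl2).2 hlam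
    linarith
  have hQ2 : (0:ℝ) < Q - 2 := by linarith
  have hQ2' : (0:ℝ) < Q + 2 := by linarith
  have hQ0 : (0:ℝ) < Q := by linarith
  have hb' : 0 < b := by rw [hb]; positivity
  have hba : 0 < b * a := mul_pos hb' ha'
  have hal : lam₂ - lam₁ = a * lam₂ := by rw [ha]; field_simp
  set P := b ^ ((Q-2)/2) * a ^ (Q/2) * S ^ (Q/2) with hP
  have hPpos : 0 < P := by positivity
  have hα : α₀ = 1/(Q+2) * P := by rw [hα₀, hP]; ring
  have hα₀pos : 0 < α₀ := by rw [hα]; positivity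
  -- merge lemmas
  have haa : a ^ ((Q-2)/2) * a = a ^ (Q/2) := by
    rw [show Q/2 = (Q-2)/2 + 1 by ring, Real.rpow_add ha', Real.rpow_one]
  have hbb : b ^ ((Q-2)/4) * b ^ ((Q-2)/4) = b ^ ((Q-2)/2) := by
    rw [← Real.rpow_add hb']; ring_nf
  have haa2 : a ^ ((Q+2)/4) * a ^ ((Q-2)/4) = a ^ (Q/2) := by
    rw [← Real.rpow_add ha', show (Q+2)/4 + (Q-2)/4 = Q/2 by ring]
  have hSS : S ^ (Q/4) * S ^ (Q/4) = S ^ (Q/2) := by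
    rw [← Real.rpow_add hS, show Q/4 + Q/4 = Q/2 by ring]
  have hll : lam₂ ^ (-(Q/4)) * lam₂ ^ ((Q+2)/4) * lam₂ ^ (-(1:ℝ)/2) = 1 := by
    rw [← Real.rpow_add hl2, ← Real.rpow_add hl2,
      show -(Q/4) + (Q+2)/4 + -(1:ℝ)/2 = 0 by ring, Real.rpow_zero]
  -- E1
  have E1 : a * σ₀ ^ 2 = P := by
    rw [hσ₀, mul_pow, ← Real.rpow_natCast ((b*a) ^ ((Q-2)/4)) 2,
      ← Real.rpow_natCast (S ^ (Q/4)) 2, ← Real.rpow_mul hba.le, ← Real.rpow_mul hS.le,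
      Real.mul_rpow hb'.le ha'.le]
    push_cast
    rw [show (Q-2)/4*2 = (Q-2)/2 by ring, show Q/4*2 = Q/2 by ring, hP]
    calc a * (b ^ ((Q-2)/2) * a ^ ((Q-2)/2) * S ^ (Q/2))
        = b ^ ((Q-2)/2) * (a ^ ((Q-2)/2) * a) * S ^ (Q/2) := by ring
      _ = b ^ ((Q-2)/2) * a ^ (Q/2) * S ^ (Q/2) := by rw [haa]
  -- E2
  have hbq : (Q-2)/(2*Q) * b = (Q-2)/(2*(Q+2)) := by
    rw [hb]; field_simp
  have hbQ2 : b ^ (Q/2) = b ^ ((Q-2)/2) * b := by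
    rw [show Q/2 = (Q-2)/2 + 1 by ring, Real.rpow_add hb', Real.rpow_one]
  have hScancel : S ^ (-(Q/(Q-2))) * S ^ (Q/(Q-2)) = 1 := by
    rw [← Real.rpow_add hS, neg_add_cancel, Real.rpow_zero]
  have E2 : (Q - 2) / (2 * Q) * S ^ (-(Q/(Q-2))) * σ₀ ^ (2*Q/(Q-2))
      = (Q-2)/(2*(Q+2)) * P := by
    rw [hσ₀, Real.mul_rpow (Real.rpow_nonneg hba.le _) (Real.rpow_nonneg hS.le _),
      ← Real.rpow_mul hba.le, ← Real.rpow_mul hS.le,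
      show (Q-2)/4 * (2*Q/(Q-2)) = Q/2 by field_simp; ring,
      show Q/4 * (2*Q/(Q-2)) = Q/2 + Q/(Q-2) by field_simp; ring,
      Real.rpow_add hS, Real.mul_rpow hb'.le ha'.le, hbQ2, hP]
    calc (Q-2)/(2*Q) * S ^ (-(Q/(Q-2))) * (b ^ ((Q-2)/2) * b * a ^ (Q/2) * (S ^ (Q/2) * S ^ (Q/(Q-2))))
        = ((Q-2)/(2*Q) * b) * (S ^ (-(Q/(Q-2))) * S ^ (Q/(Q-2))) * (b ^ ((Q-2)/2) * a ^ (Q/2) * S ^ (Q/2)) := by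
          ring
      _ = (Q-2)/(2*(Q+2)) * (b ^ ((Q-2)/2) * a ^ (Q/2) * S ^ (Q/2)) := by
          rw [hbq, hScancel, mul_one]
  -- E3
  have E3 : K₁ * lam₂ ^ (-(1:ℝ)/2) * σ₀ = 1/(Q+2) * P := by
    rw [hK₁, hσ₀, hal, Real.mul_rpow ha'.le hl2.le, Real.mul_rpow hb'.le ha'.le, hP]
    calc lam₂ ^ (-(Q/4)) / (Q+2) * S ^ (Q/4) * b ^ ((Q-2)/4) * (a ^ ((Q+2)/4) * lam₂ ^ ((Q+2)/4))
          * lam₂ ^ (-(1:ℝ)/2) * (b ^ ((Q-2)/4) * a ^ ((Q-2)/4) * S ^ (Q/4))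
        = 1/(Q+2) * (lam₂ ^ (-(Q/4)) * lam₂ ^ ((Q+2)/4) * lam₂ ^ (-(1:ℝ)/2))
          * ((b ^ ((Q-2)/4) * b ^ ((Q-2)/4)) * (a ^ ((Q+2)/4) * a ^ ((Q-2)/4))
            * (S ^ (Q/4) * S ^ (Q/4))) := by ring
      _ = 1/(Q+2) * (b ^ ((Q-2)/2) * a ^ (Q/2) * S ^ (Q/2)) := by
          rw [hll, hbb, haa2, hSS, mul_one]
  refine ⟨?_, hα₀pos⟩
  have hebound : e * lam₂ ^ (-(1:ℝ)/2) * σ₀ ≤ 1/(Q+2) * P := by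
    rw [← E3]
    have hσpos : 0 < σ₀ := by rw [hσ₀]; positivity
    have hl : (0:ℝ) ≤ lam₂ ^ (-(1:ℝ)/2) := (Real.rpow_pos_of_pos hl2 _).le
    have := mul_le_mul_of_nonneg_right (mul_le_mul_of_nonneg_right heK hl) hσpos.le
    linarith
  have key : 1/2 * P - (Q-2)/(2*(Q+2)) * P - 1/(Q+2) * P = 1/(Q+2) * P := by
    field_simp
    ring
  have h1 : 1/2 * a * σ₀ ^ 2 = 1/2 * P := by rw [← E1]; ring
  rw [hα]
  rw [h1, E2]
  linarith
end
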